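/- There exist positive constants c_1, c_2 independent of N, and vectors v^+, v^- ∈ V_0 with ‖Dv^+‖_{ℓ^2_ε} = ‖Dv^-‖_{ℓ^2_ε} = 1, such that ⟨L_2 v^+, v^+⟩ ≥ c_1(N^{1/2} − c_2) and ⟨L_2 v^-, v^-⟩ ≤ −c_1(N^{1/2} − c_2). -/

import Mathlib

noncomputable def eps (N : ℤ) : ℝ := 1 / (N : ℝ)

noncomputable def Dd (N : ℤ) (v : ℤ → ℝ) (j : ℤ) : ℝ := (v j - v (j-1)) / eps N

noncomputable def L2op (N K : ℤ) (v : ℤ → ℝ) (j : ℤ) : ℝ :=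
  if -K ≤ j ∧ j ≤ K then (-v (j+2) + 2 * v j - v (j-2)) / (eps N)^2
  else 4 * (-v (j+1) + 2 * v j - v (j-1)) / (eps N)^2

/- Auxiliary construction: a tent profile plus a one-site spike at `K+1`. -/

noncomputable def phif (N : ℤ) (j : ℤ) : ℝ := ((N - |j| : ℤ) : ℝ) / (2 * (N : ℝ))

noncomputable def pfn (N K : ℤ) (σ : ℝ) (j : ℤ) : ℝ :=
  if j = K + 1 then σ * Real.sqrt (N : ℝ) / (2 * (N : ℝ)) else 0

noncomputable def vC (N K : ℤ) (σ : ℝ) (j : ℤ) : ℝ := phif N j + pfn N K σ j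

lemma phif_pos (N j : ℤ) (h : 0 ≤ j) : phif N j = ((N : ℝ) - (j : ℝ)) / (2 * (N : ℝ)) := by
  unfold phif
  rw [abs_of_nonneg h]
  push_cast
  ring

lemma phif_neg (N j : ℤ) (h : j ≤ 0) : phif N j = ((N : ℝ) + (j : ℝ)) / (2 * (N : ℝ)) := by
  unfold phif
  rw [abs_of_nonpos h]
  push_cast
  ring

lemma pfn_ne (N K : ℤ) (σ : ℝ) (j : ℤ) (h : j ≠ K + 1) : pfn N K σ j = 0 := if_neg h

lemma pfn_sp (N K : ℤ) (σ : ℝ) (j : ℤ) (h : j = K + 1) :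
    pfn N K σ j = σ * Real.sqrt (N : ℝ) / (2 * (N : ℝ)) := if_pos h

lemma L2op_add (N K : ℤ) (g h : ℤ → ℝ) (j : ℤ) :
    L2op N K (fun i => g i + h i) j = L2op N K g j + L2op N K h j := by
  unfold L2op
  split_ifs <;> simp only [] <;> ring

lemma L2phi_zero (N K j : ℤ) (hN : 4 ≤ N) (hK : 2 ≤ K) (hKN : 2*K ≤ N)
    (h1 : j ≠ -1) (h2 : j ≠ 0) (h3 : j ≠ 1) : L2op N K (phif N) j = 0 := by
  unfold L2op
  split_ifs with hA
  · rcases le_or_gt 2 j with h | h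
    · rw [phif_pos N (j+2) (by omega), phif_pos N j (by omega), phif_pos N (j-2) (by omega),
        div_eq_zero_iff]
      left
      push_cast
      ring
    · rw [phif_neg N (j+2) (by omega), phif_neg N j (by omega), phif_neg N (j-2) (by omega),
        div_eq_zero_iff]
      left
      push_cast
      ring
  · rcases le_or_gt (-K) j with h | h
    · have hj : K + 1 ≤ j := by omega
      rw [phif_pos N (j+1) (by omega), phif_pos N j (by omega), phif_pos N (j-1) (by omega),
        div_eq_zero_iff]
      left
      push_cast
      ring
    · have hj : j ≤ -K - 1 := by omega
      rw [phif_neg N (j+1) (by omega), phif_neg N j (by omega), phif_neg N (j-1) (by omega),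
        div_eq_zero_iff]
      left
      push_cast
      ring

lemma L2pf_zero (N K j : ℤ) (σ : ℝ) (hK : 2 ≤ K)
    (h1 : j ≠ K-1) (h2 : j ≠ K+1) (h3 : j ≠ K+2) : L2op N K (pfn N K σ) j = 0 := by
  unfold L2op pfn
  split_ifs <;> first | omega | norm_num

lemma Dd_sq_generic (N K : ℤ) (σ : ℝ) (hN : 4 ≤ N) (hK : 2 ≤ K) (j : ℤ)
    (h1 : j ≠ K+1) (h2 : j ≠ K+2) :
    (Dd N (vC N K σ) j)^2 = 1/4 := by
  have hNe : (N : ℝ) ≠ 0 := Int.cast_ne_zero.mpr (by omega)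
  unfold Dd vC eps
  rw [pfn_ne N K σ j h1, pfn_ne N K σ (j-1) (by omega)]
  rcases le_or_gt j 0 with hj | hj
  · rw [phif_neg N j hj, phif_neg N (j-1) (by omega)]
    push_cast
    field_simp
    ring
  · rw [phif_pos N j (by omega), phif_pos N (j-1) (by omega)]
    push_cast
    field_simp
    ring

lemma norm_sum (N K : ℤ) (σ : ℝ) (hN : 4 ≤ N) (hK : 2 ≤ K) (hKN : 2*K ≤ N)
    (hσ : σ = 1 ∨ σ = -1) :
    ∑ j ∈ Finset.Icc (-N+1) N, (Dd N (vC N K σ) j)^2 = (N : ℝ) := by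
  have hN0 : (0:ℝ) < (N : ℝ) := by exact_mod_cast (by omega : (0:ℤ) < N)
  have hNe : (N : ℝ) ≠ 0 := ne_of_gt hN0
  have hA : Real.sqrt (N:ℝ) * Real.sqrt (N:ℝ) = (N:ℝ) := Real.mul_self_sqrt hN0.le
  have split : ∀ j ∈ Finset.Icc (-N+1) N, (Dd N (vC N K σ) j)^2
      = 1/4 + ((Dd N (vC N K σ) j)^2 - 1/4) := by
    intro j _
    ring
  rw [Finset.sum_congr rfl split, Finset.sum_add_distrib]
  have h1 : ∑ _j ∈ Finset.Icc (-N+1) N, (1/4 : ℝ) = (N : ℝ)/2 := by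
    rw [Finset.sum_const, Int.card_Icc, nsmul_eq_mul]
    have h2 : ((N + 1 - (-N + 1)).toNat : ℤ) = 2*N := by
      rw [Int.toNat_of_nonneg (by omega)]
      ring
    have h3 : ((N + 1 - (-N + 1)).toNat : ℝ) = 2*(N:ℝ) := by exact_mod_cast h2
    rw [h3]
    ring
  have h2 : ∑ j ∈ Finset.Icc (-N+1) N, ((Dd N (vC N K σ) j)^2 - 1/4)
      = ∑ j ∈ ({K+1, K+2} : Finset ℤ), ((Dd N (vC N K σ) j)^2 - 1/4) := by
    refine (Finset.sum_subset ?_ ?_).symm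
    · intro j hj
      simp only [Finset.mem_insert, Finset.mem_singleton] at hj
      rw [Finset.mem_Icc]
      rcases hj with rfl | rfl <;> omega
    · intro j _ hj
      simp only [Finset.mem_insert, Finset.mem_singleton] at hj
      push_neg at hj
      rw [Dd_sq_generic N K σ hN hK j hj.1 hj.2]
      ring
  rw [h1, h2, Finset.sum_pair (by omega : K+1 ≠ K+2)]
  have e1 : Dd N (vC N K σ) (K+1) = (σ * Real.sqrt (N:ℝ) - 1)/2 := by
    unfold Dd vC eps
    rw [pfn_sp N K σ (K+1) rfl, pfn_ne N K σ (K+1-1) (by omega),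
      phif_pos N (K+1) (by omega), phif_pos N (K+1-1) (by omega)]
    push_cast
    field_simp
    ring
  have e2 : Dd N (vC N K σ) (K+2) = -(σ * Real.sqrt (N:ℝ) + 1)/2 := by
    unfold Dd vC eps
    rw [pfn_ne N K σ (K+2) (by omega), pfn_sp N K σ (K+2-1) (by omega),
      phif_pos N (K+2) (by omega), phif_pos N (K+2-1) (by omega)]
    push_cast
    field_simp
    ring
  rw [e1, e2]
  rcases hσ with rfl | rfl
  · linear_combination (1/2) * hA
  · linear_combination (1/2) * hA

lemma Q_sum (N K : ℤ) (σ : ℝ) (hN : 4 ≤ N) (hK : 2 ≤ K) (hKN : 2*K ≤ N)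
    (hσ : σ = 1 ∨ σ = -1) :
    ∑ j ∈ Finset.Icc (-N+1) (N-1), L2op N K (vC N K σ) j * vC N K σ j
      = 4*(N:ℝ) - 1 + σ * (Real.sqrt (N:ℝ) * (3*((N:ℝ) - (K:ℝ)) - 1))/4 := by
  have hN0 : (0:ℝ) < (N : ℝ) := by exact_mod_cast (by omega : (0:ℤ) < N)
  have hNe : (N : ℝ) ≠ 0 := ne_of_gt hN0
  have hA : Real.sqrt (N:ℝ) * Real.sqrt (N:ℝ) = (N:ℝ) := Real.mul_self_sqrt hN0.le
  have hsplit : ∀ j ∈ Finset.Icc (-N+1) (N-1),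
      L2op N K (vC N K σ) j * vC N K σ j
        = L2op N K (phif N) j * vC N K σ j
          + (L2op N K (pfn N K σ) j * phif N j + L2op N K (pfn N K σ) j * pfn N K σ j) := by
    intro j _
    have h1 : L2op N K (vC N K σ) j = L2op N K (phif N) j + L2op N K (pfn N K σ) j := by
      have hv : vC N K σ = fun i => phif N i + pfn N K σ i := rfl
      rw [hv, L2op_add]
    have h2 : vC N K σ j = phif N j + pfn N K σ j := rfl
    rw [h1, h2]
    ring
  rw [Finset.sum_congr rfl hsplit, Finset.sum_add_distrib, Finset.sum_add_distrib]
  -- the tent part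
  have hSA : ∑ j ∈ Finset.Icc (-N+1) (N-1), L2op N K (phif N) j * vC N K σ j
      = 2*(N:ℝ) - 1 := by
    have hsub : ({-1, 0, 1} : Finset ℤ) ⊆ Finset.Icc (-N+1) (N-1) := by
      intro j hj
      simp only [Finset.mem_insert, Finset.mem_singleton] at hj
      rw [Finset.mem_Icc]
      rcases hj with rfl | rfl | rfl <;> omega
    have hz : ∀ j ∈ Finset.Icc (-N+1) (N-1), j ∉ ({-1, 0, 1} : Finset ℤ) →
        L2op N K (phif N) j * vC N K σ j = 0 := by
      intro j _ hj
      simp only [Finset.mem_insert, Finset.mem_singleton] at hj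
      push_neg at hj
      rw [L2phi_zero N K j hN hK hKN hj.1 hj.2.1 hj.2.2, zero_mul]
    rw [← Finset.sum_subset hsub hz]
    rw [Finset.sum_insert (by norm_num), Finset.sum_insert (by norm_num),
      Finset.sum_singleton]
    have t0 : L2op N K (phif N) 0 * vC N K σ 0 = (N:ℝ) := by
      unfold L2op vC eps
      rw [if_pos (show -K ≤ (0:ℤ) ∧ (0:ℤ) ≤ K by omega)]
      rw [pfn_ne N K σ 0 (by omega), phif_pos N (0+2) (by omega), phif_pos N 0 (by omega),
        phif_neg N (0-2) (by omega)]
      push_cast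
      field_simp
      ring
    have t1 : L2op N K (phif N) 1 * vC N K σ 1 = ((N:ℝ) - 1)/2 := by
      unfold L2op vC eps
      rw [if_pos (show -K ≤ (1:ℤ) ∧ (1:ℤ) ≤ K by omega)]
      rw [pfn_ne N K σ 1 (by omega), phif_pos N (1+2) (by omega), phif_pos N 1 (by omega),
        phif_neg N (1-2) (by omega)]
      push_cast
      field_simp
      ring
    have tm1 : L2op N K (phif N) (-1) * vC N K σ (-1) = ((N:ℝ) - 1)/2 := by
      unfold L2op vC eps
      rw [if_pos (show -K ≤ (-1:ℤ) ∧ (-1:ℤ) ≤ K by omega)]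
      rw [pfn_ne N K σ (-1) (by omega), phif_pos N (-1+2) (by omega), phif_neg N (-1) (by omega),
        phif_neg N (-1-2) (by omega)]
      push_cast
      field_simp
      ring
    rw [t0, t1, tm1]
    ring
  -- the cross part
  have hSB : ∑ j ∈ Finset.Icc (-N+1) (N-1), L2op N K (pfn N K σ) j * phif N j
      = σ * (Real.sqrt (N:ℝ) * (3*((N:ℝ) - (K:ℝ)) - 1))/4 := by
    have hstep1 : ∑ j ∈ Finset.Icc (-N+1) (N-1), L2op N K (pfn N K σ) j * phif N j
        = ∑ j ∈ Finset.Icc (-N+1) N, L2op N K (pfn N K σ) j * phif N j := by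
      refine Finset.sum_subset (Finset.Icc_subset_Icc (le_refl _) (by omega)) ?_
      intro j hjU hj
      rw [Finset.mem_Icc] at hjU
      rw [Finset.mem_Icc] at hj
      have hjN : j = N := by omega
      rw [hjN, phif_pos N N (by omega), sub_self, zero_div, mul_zero]
    have hsub : ({K-1, K+1, K+2} : Finset ℤ) ⊆ Finset.Icc (-N+1) N := by
      intro j hj
      simp only [Finset.mem_insert, Finset.mem_singleton] at hj
      rw [Finset.mem_Icc]
      rcases hj with rfl | rfl | rfl <;> omega
    have hz : ∀ j ∈ Finset.Icc (-N+1) N, j ∉ ({K-1, K+1, K+2} : Finset ℤ) →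
        L2op N K (pfn N K σ) j * phif N j = 0 := by
      intro j _ hj
      simp only [Finset.mem_insert, Finset.mem_singleton] at hj
      push_neg at hj
      rw [L2pf_zero N K j σ hK hj.1 hj.2.1 hj.2.2, zero_mul]
    rw [hstep1, ← Finset.sum_subset hsub hz]
    rw [Finset.sum_insert (by simp; omega), Finset.sum_pair (by omega : K+1 ≠ K+2)]
    have b1 : L2op N K (pfn N K σ) (K-1) * phif N (K-1)
        = -(σ * Real.sqrt (N:ℝ) * ((N:ℝ) - (K:ℝ) + 1))/4 := by
      unfold L2op
      rw [if_pos (show -K ≤ K-1 ∧ K-1 ≤ K by omega)]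
      rw [pfn_sp N K σ (K-1+2) (by omega), pfn_ne N K σ (K-1) (by omega),
        pfn_ne N K σ (K-1-2) (by omega), phif_pos N (K-1) (by omega)]
      unfold eps
      push_cast
      field_simp
      ring
    have b2 : L2op N K (pfn N K σ) (K+1) * phif N (K+1)
        = 2 * σ * Real.sqrt (N:ℝ) * ((N:ℝ) - (K:ℝ) - 1) := by
      unfold L2op
      rw [if_neg (show ¬(-K ≤ K+1 ∧ K+1 ≤ K) by omega)]
      rw [pfn_ne N K σ (K+1+1) (by omega), pfn_sp N K σ (K+1) rfl,
        pfn_ne N K σ (K+1-1) (by omega), phif_pos N (K+1) (by omega)]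
      unfold eps
      push_cast
      field_simp
      ring
    have b3 : L2op N K (pfn N K σ) (K+2) * phif N (K+2)
        = -(σ * Real.sqrt (N:ℝ) * ((N:ℝ) - (K:ℝ) - 2)) := by
      unfold L2op
      rw [if_neg (show ¬(-K ≤ K+2 ∧ K+2 ≤ K) by omega)]
      rw [pfn_ne N K σ (K+2+1) (by omega), pfn_ne N K σ (K+2) (by omega),
        pfn_sp N K σ (K+2-1) (by omega), phif_pos N (K+2) (by omega)]
      unfold eps
      push_cast
      field_simp
      ring
    rw [b1, b2, b3]
    ring
  -- the pure spike part
  have hSD : ∑ j ∈ Finset.Icc (-N+1) (N-1), L2op N K (pfn N K σ) j * pfn N K σ j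
      = 2*(N:ℝ) := by
    have hsub : ({K+1} : Finset ℤ) ⊆ Finset.Icc (-N+1) (N-1) := by
      intro j hj
      simp only [Finset.mem_singleton] at hj
      rw [Finset.mem_Icc]
      omega
    have hz : ∀ j ∈ Finset.Icc (-N+1) (N-1), j ∉ ({K+1} : Finset ℤ) →
        L2op N K (pfn N K σ) j * pfn N K σ j = 0 := by
      intro j _ hj
      simp only [Finset.mem_singleton] at hj
      rw [pfn_ne N K σ j hj, mul_zero]
    rw [← Finset.sum_subset hsub hz, Finset.sum_singleton]
    unfold L2op
    rw [if_neg (show ¬(-K ≤ K+1 ∧ K+1 ≤ K) by omega)]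
    rw [pfn_ne N K σ (K+1+1) (by omega), pfn_sp N K σ (K+1) rfl,
      pfn_ne N K σ (K+1-1) (by omega)]
    unfold eps
    rcases hσ with rfl | rfl
    · field_simp
      linear_combination 4 * hA
    · field_simp
      linear_combination 4 * hA
  rw [hSA, hSB, hSD]
  ring

/-- There are constants `c₁, c₂ > 0` independent of `N` and vectors
`v⁺, v⁻ ∈ V₀` with unit `ℓ²_ε` strain norm such that
`⟨L₂v⁺, v⁺⟩ ≥ c₁(N^{1/2} - c₂)` and `⟨L₂v⁻, v⁻⟩ ≤ -c₁(N^{1/2} - c₂)`. -/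
theorem L2_unbounded_rayleigh :
    ∃ c1 c2 : ℝ, 0 < c1 ∧ 0 < c2 ∧
      ∀ N K : ℤ, 1 ≤ N → 2 ≤ K → 2 * K ≤ N →
        ∃ vp vm : ℤ → ℝ,
          vp (-N) = 0 ∧ vp N = 0 ∧ vm (-N) = 0 ∧ vm N = 0 ∧
          Real.sqrt (eps N * ∑ j ∈ Finset.Icc (-N+1) N, (Dd N vp j)^2) = 1 ∧
          Real.sqrt (eps N * ∑ j ∈ Finset.Icc (-N+1) N, (Dd N vm j)^2) = 1 ∧
          c1 * (Real.sqrt (N : ℝ) - c2) ≤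
            eps N * ∑ j ∈ Finset.Icc (-N+1) (N-1), L2op N K vp j * vp j ∧
          eps N * ∑ j ∈ Finset.Icc (-N+1) (N-1), L2op N K vm j * vm j ≤
            -(c1 * (Real.sqrt (N : ℝ) - c2)) := by
  refine ⟨1/4, 20, by norm_num, by norm_num, ?_⟩
  intro N K hN1 hK hKN
  have hN : 4 ≤ N := by omega
  have hN0 : (0:ℝ) < (N : ℝ) := by exact_mod_cast (by omega : (0:ℤ) < N)
  have hNe : (N : ℝ) ≠ 0 := ne_of_gt hN0
  have hA : Real.sqrt (N:ℝ) * Real.sqrt (N:ℝ) = (N:ℝ) := Real.mul_self_sqrt hN0.le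
  have hApos : (0:ℝ) < Real.sqrt (N:ℝ) := Real.sqrt_pos.2 hN0
  have hepsN : eps N * (N : ℝ) = 1 := by
    unfold eps
    field_simp
  have hMz : N ≤ 3*(N-K) - 1 := by omega
  have hM : (N:ℝ) ≤ 3*((N:ℝ) - (K:ℝ)) - 1 := by exact_mod_cast hMz
  have hbound : ∀ σ : ℝ, vC N K σ (-N) = 0 ∧ vC N K σ N = 0 := by
    intro σ
    constructor
    · unfold vC phif pfn
      rw [if_neg (show -N ≠ K+1 by omega), abs_neg, abs_of_nonneg (show (0:ℤ) ≤ N by omega)]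
      simp
    · unfold vC phif pfn
      rw [if_neg (show N ≠ K+1 by omega), abs_of_nonneg (show (0:ℤ) ≤ N by omega)]
      simp
  have hnorm : ∀ σ : ℝ, σ = 1 ∨ σ = -1 →
      Real.sqrt (eps N * ∑ j ∈ Finset.Icc (-N+1) N, (Dd N (vC N K σ) j)^2) = 1 := by
    intro σ hσ
    rw [norm_sum N K σ hN hK hKN hσ, hepsN, Real.sqrt_one]
  -- key inequality facts
  have hprod : Real.sqrt (N:ℝ) * (N:ℝ) ≤ Real.sqrt (N:ℝ) * (3*((N:ℝ) - (K:ℝ)) - 1) :=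
    mul_le_mul_of_nonneg_left hM hApos.le
  have hQp := Q_sum N K 1 hN hK hKN (Or.inl rfl)
  have hQm := Q_sum N K (-1) hN hK hKN (Or.inr rfl)
  refine ⟨vC N K 1, vC N K (-1), (hbound 1).1, (hbound 1).2, (hbound (-1)).1, (hbound (-1)).2,
    hnorm 1 (Or.inl rfl), hnorm (-1) (Or.inr rfl), ?_, ?_⟩
  · rw [hQp]
    have expand : eps N * (4*(N:ℝ) - 1 + 1 * (Real.sqrt (N:ℝ) * (3*((N:ℝ) - (K:ℝ)) - 1))/4)
        = 4 - 1/(N:ℝ) + Real.sqrt (N:ℝ) * (3*((N:ℝ) - (K:ℝ)) - 1)/(4*(N:ℝ)) := by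
      unfold eps
      field_simp
    rw [expand]
    have h5 : Real.sqrt (N:ℝ)/4 ≤ Real.sqrt (N:ℝ) * (3*((N:ℝ) - (K:ℝ)) - 1)/(4*(N:ℝ)) := by
      rw [div_le_div_iff₀ (by norm_num) (by positivity)]
      nlinarith [hprod]
    have h6 : 1/(N:ℝ) ≤ 1 := by
      rw [div_le_one hN0]
      exact_mod_cast (by omega : (1:ℤ) ≤ N)
    linarith
  · rw [hQm]
    have expand : eps N * (4*(N:ℝ) - 1 + (-1) * (Real.sqrt (N:ℝ) * (3*((N:ℝ) - (K:ℝ)) - 1))/4)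
        = 4 - 1/(N:ℝ) - Real.sqrt (N:ℝ) * (3*((N:ℝ) - (K:ℝ)) - 1)/(4*(N:ℝ)) := by
      unfold eps
      field_simp
      ring
    rw [expand]
    have h5 : Real.sqrt (N:ℝ)/4 ≤ Real.sqrt (N:ℝ) * (3*((N:ℝ) - (K:ℝ)) - 1)/(4*(N:ℝ)) := by
      rw [div_le_div_iff₀ (by norm_num) (by positivity)]
      nlinarith [hprod]
    have h7 : 0 < 1/(N:ℝ) := by positivity
    linarith
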